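/- Verification of dual feasibility: let u_1,...,u_{2K} ∈ ℝ^N_{≥0} be pairwise orthogonal unit vectors, pair them as (u_{2j−1}, u_{2j}), and set λ_j = u_{2j−1} − u_{2j}. Then for any z ∈ ℝ^N with ‖z‖₂ ≤ 1, we have ∑_{j=1}^K (λ_jᵀ(z)₊)² ≤ 1. -/

import Mathlib

open scoped RealInnerProductSpace


/-- Euclidean norm of a vector. -/
noncomputable def vecNorm {n : ℕ} (v : Fin n → ℝ) : ℝ := Real.sqrt (∑ i, (v i) ^ 2)

/-- Entrywise ReLU of a vector. -/
def reluV {n : ℕ} (v : Fin n → ℝ) : Fin n → ℝ := fun i => max (v i) 0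

/-- dual feasibility: let `u s`, for `s : Fin K ⊕ Fin K`, be `2K` pairwise
orthogonal nonnegative unit vectors in `ℝ^N`, paired as `(u (inl j), u (inr j))`, and set
`λ_j = u (inl j) − u (inr j)`. Then for any `z` with `‖z‖₂ ≤ 1`,
`∑_j (λ_jᵀ (z)₊)² ≤ 1`. -/
theorem relu_dual_feasibility
    (N K : ℕ) (u : (Fin K ⊕ Fin K) → Fin N → ℝ)
    (hnn : ∀ s i, 0 ≤ u s i)
    (hunit : ∀ s, vecNorm (u s) = 1)
    (horth : ∀ s s', s ≠ s' → ∑ i, u s i * u s' i = 0)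
    (z : Fin N → ℝ) (hz : vecNorm z ≤ 1) :
    ∑ j : Fin K, (∑ i, (u (Sum.inl j) i - u (Sum.inr j) i) * reluV z i) ^ 2 ≤ 1 := by
  classical
  set w : EuclideanSpace ℝ (Fin N) := (WithLp.equiv 2 _).symm (reluV z) with hwdef
  set U : (Fin K ⊕ Fin K) → EuclideanSpace ℝ (Fin N) :=
    fun s => (WithLp.equiv 2 _).symm (u s) with hUdef
  have hinner : ∀ x y : EuclideanSpace ℝ (Fin N), ⟪x, y⟫ = ∑ i, x i * y i := by
    intro x y
    simp [PiLp.inner_apply, RCLike.inner_apply, mul_comm]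
  have hUortho : Orthonormal ℝ U := by
    rw [orthonormal_iff_ite]
    intro s s'
    by_cases h : s = s'
    · subst h
      have h1 : (∑ i, (u s i) ^ 2) = 1 := by
        have := hunit s
        rw [vecNorm, Real.sqrt_eq_one] at this
        exact this
      simp only [if_pos rfl, hinner]
      simpa [pow_two, U] using h1
    · rw [if_neg h, hinner]
      exact horth s s' h
  have hwnn : ∀ i, 0 ≤ w i := fun i => le_max_right _ _
  have hwz : ∀ i, (w i) ^ 2 ≤ (z i) ^ 2 := by
    intro i
    have : |w i| ≤ |z i| := by
      rw [abs_of_nonneg (hwnn i)]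
      rcases le_or_gt (z i) 0 with h | h
      · simp [hwdef, w, reluV, max_eq_right h]
      · simp [hwdef, w, reluV, max_eq_left h.le, le_abs_self]
    calc (w i) ^ 2 = |w i| ^ 2 := (sq_abs _).symm
      _ ≤ |z i| ^ 2 := by gcongr
      _ = (z i) ^ 2 := sq_abs _
  have hwsum : ∑ i, (w i) ^ 2 ≤ 1 := by
    have h1 : ∑ i, (w i) ^ 2 ≤ ∑ i, (z i) ^ 2 := Finset.sum_le_sum fun i _ => hwz i
    have h2 : ∑ i, (z i) ^ 2 ≤ 1 := by
      have hnn2 : (0:ℝ) ≤ ∑ i, (z i) ^ 2 := by positivity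
      rw [vecNorm] at hz
      nlinarith [Real.sq_sqrt hnn2, Real.sqrt_nonneg (∑ i, (z i)^2)]
    linarith
  have hwnorm : ‖w‖ ^ 2 ≤ 1 := by
    rw [EuclideanSpace.norm_eq]
    rw [Real.sq_sqrt (by positivity)]
    simpa using hwsum
  have bessel := hUortho.sum_inner_products_le (s := Finset.univ) w
  have bessel' : ∑ s : Fin K ⊕ Fin K, (⟪U s, w⟫) ^ 2 ≤ 1 := by
    have : ∑ s : Fin K ⊕ Fin K, ‖⟪U s, w⟫‖ ^ 2 ≤ ‖w‖ ^ 2 := bessel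
    calc ∑ s : Fin K ⊕ Fin K, (⟪U s, w⟫) ^ 2
        = ∑ s : Fin K ⊕ Fin K, ‖⟪U s, w⟫‖ ^ 2 := by
          simp [Real.norm_eq_abs, sq_abs]
      _ ≤ ‖w‖ ^ 2 := this
      _ ≤ 1 := hwnorm
  rw [Fintype.sum_sum_type] at bessel'
  have hinnn : ∀ s, 0 ≤ ⟪U s, w⟫ := by
    intro s
    rw [hinner]
    exact Finset.sum_nonneg fun i _ => mul_nonneg (hnn s i) (hwnn i)
  have key : ∀ j : Fin K,
      (∑ i, (u (Sum.inl j) i - u (Sum.inr j) i) * reluV z i) ^ 2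
        ≤ (⟪U (Sum.inl j), w⟫) ^ 2 + (⟪U (Sum.inr j), w⟫) ^ 2 := by
    intro j
    have hsplit : ∑ i, (u (Sum.inl j) i - u (Sum.inr j) i) * reluV z i
        = ⟪U (Sum.inl j), w⟫ - ⟪U (Sum.inr j), w⟫ := by
      rw [hinner, hinner, ← Finset.sum_sub_distrib]
      apply Finset.sum_congr rfl
      intro i _
      show _ = u (Sum.inl j) i * reluV z i - u (Sum.inr j) i * reluV z i
      ring
    rw [hsplit]
    have h1 := hinnn (Sum.inl j)
    have h2 := hinnn (Sum.inr j)
    nlinarith [mul_nonneg h1 h2]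
  calc ∑ j : Fin K, (∑ i, (u (Sum.inl j) i - u (Sum.inr j) i) * reluV z i) ^ 2
      ≤ ∑ j : Fin K, ((⟪U (Sum.inl j), w⟫) ^ 2 + (⟪U (Sum.inr j), w⟫) ^ 2) :=
        Finset.sum_le_sum fun j _ => key j
    _ = ∑ j : Fin K, (⟪U (Sum.inl j), w⟫) ^ 2 + ∑ j : Fin K, (⟪U (Sum.inr j), w⟫) ^ 2 :=
        Finset.sum_add_distrib
    _ ≤ 1 := bessel'
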